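/- (Invariant Hahn–Banach, abelian case) Let X be a real normed space, Y ⊆ X a subspace, g ∈ Y*, and F an abelian semigroup of bounded linear operators on X with T(Y) ⊆ Y, ‖T‖ ≤ 1, and g(T y) = g(y) for all y ∈ Y, T ∈ F. Then g extends to Λ ∈ X* with ‖Λ‖ = ‖g‖ and Λ ∘ T = Λ for all T ∈ F. -/

import Mathlib

open scoped Pointwise

namespace Stmt11Aux

variable {X : Type*} [NormedAddCommGroup X] [NormedSpace ℝ X]

noncomputable def A (l : List (X →L[ℝ] X)) : X →L[ℝ] X :=
  ((l.length : ℝ))⁻¹ • l.sum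

def pl (l m : List (X →L[ℝ] X)) : List (X →L[ℝ] X) :=
  l.flatMap (fun T => m.map T.comp)

lemma length_pl (l m : List (X →L[ℝ] X)) : (pl l m).length = l.length * m.length := by
  induction l with
  | nil => simp [pl]
  | cons T l ih =>
    simp only [pl, List.flatMap_cons, List.length_append, List.length_map,
      List.length_cons] at ih ⊢
    rw [ih]; ring

lemma mem_pl {l m : List (X →L[ℝ] X)} {R : X →L[ℝ] X} (h : R ∈ pl l m) :
    ∃ T ∈ l, ∃ S ∈ m, R = T.comp S := by
  simp only [pl, List.mem_flatMap, List.mem_map] at h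
  rcases h with ⟨T, hT, S, hS, rfl⟩
  exact ⟨T, hT, S, hS, rfl⟩

lemma pl_ne_nil {l m : List (X →L[ℝ] X)} (hl : l ≠ []) (hm : m ≠ []) : pl l m ≠ [] := by
  intro h
  have := length_pl l m
  rw [h] at this
  simp only [List.length_nil] at this
  rcases Nat.mul_eq_zero.mp this.symm with h1 | h1
  · exact hl (List.length_eq_zero_iff.mp h1)
  · exact hm (List.length_eq_zero_iff.mp h1)

lemma sum_comp (l : List (X →L[ℝ] X)) (S : X →L[ℝ] X) :
    l.sum.comp S = (l.map (fun T => T.comp S)).sum := by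
  induction l with
  | nil => simp only [List.sum_nil, List.map_nil]; rfl
  | cons T l ih => simp only [List.sum_cons, List.map_cons, ContinuousLinearMap.add_comp, ih]

lemma comp_sum (T : X →L[ℝ] X) (m : List (X →L[ℝ] X)) :
    T.comp m.sum = (m.map (fun S => T.comp S)).sum := by
  induction m with
  | nil => simp only [List.sum_nil, List.map_nil, ContinuousLinearMap.comp_zero]
  | cons S m ih => simp only [List.sum_cons, List.map_cons, ContinuousLinearMap.comp_add, ih]

lemma sum_pl (l m : List (X →L[ℝ] X)) : (pl l m).sum = l.sum.comp m.sum := by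
  induction l with
  | nil => simp only [pl, List.flatMap_nil, List.sum_nil]; rfl
  | cons T l ih =>
    simp only [pl, List.flatMap_cons, List.sum_append, List.sum_cons,
      ContinuousLinearMap.add_comp] at ih ⊢
    rw [ih, comp_sum T m]

lemma A_pl (l m : List (X →L[ℝ] X)) : A (pl l m) = (A l).comp (A m) := by
  ext x
  simp only [A, length_pl, sum_pl, ContinuousLinearMap.smul_comp,
    ContinuousLinearMap.comp_smul, ContinuousLinearMap.coe_smul', Pi.smul_apply, smul_smul]
  congr 1
  push_cast
  rw [mul_inv]
  ring

lemma comp_sum_comm (T : X →L[ℝ] X) (m : List (X →L[ℝ] X))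
    (hc : ∀ S ∈ m, T.comp S = S.comp T) : T.comp m.sum = m.sum.comp T := by
  induction m with
  | nil =>
    simp only [List.sum_nil, ContinuousLinearMap.comp_zero, ContinuousLinearMap.zero_comp]
  | cons S m ih =>
    simp only [List.sum_cons, ContinuousLinearMap.add_comp, ContinuousLinearMap.comp_add]
    rw [hc S (by simp), ih fun S' hS' => hc S' (by simp [hS'])]

lemma sum_comm (l m : List (X →L[ℝ] X)) (hc : ∀ T ∈ l, ∀ S ∈ m, T.comp S = S.comp T) :
    l.sum.comp m.sum = m.sum.comp l.sum := by
  induction l with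
  | nil =>
    simp only [List.sum_nil, ContinuousLinearMap.zero_comp, ContinuousLinearMap.comp_zero]
  | cons T l ih =>
    simp only [List.sum_cons, ContinuousLinearMap.add_comp, ContinuousLinearMap.comp_add]
    rw [ih fun T' hT' => hc T' (by simp [hT']),
      comp_sum_comm T m (fun S hS => hc T (by simp) S hS)]

lemma A_pl_comm (l m : List (X →L[ℝ] X))
    (hc : ∀ T ∈ l, ∀ S ∈ m, T.comp S = S.comp T) : A (pl l m) = A (pl m l) := by
  simp only [A, length_pl, sum_pl]
  rw [sum_comm l m hc, Nat.mul_comm]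

section Main

variable {X : Type*} [NormedAddCommGroup X] [NormedSpace ℝ X]

lemma sum_apply' (l : List (X →L[ℝ] X)) (x : X) :
    l.sum x = (l.map (fun T => T x)).sum := by
  induction l with
  | nil => simp
  | cons T l ih => simp [ih]

lemma norm_list_sum_le (l : List X) (c : ℝ) (h : ∀ z ∈ l, ‖z‖ ≤ c) :
    ‖l.sum‖ ≤ l.length * c := by
  induction l with
  | nil => simp
  | cons z l ih =>
    simp only [List.sum_cons, List.length_cons]
    calc ‖z + l.sum‖ ≤ ‖z‖ + ‖l.sum‖ := norm_add_le _ _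
    _ ≤ c + l.length * c := add_le_add (h z (by simp)) (ih fun w hw => h w (by simp [hw]))
    _ = ((l.length + 1 : ℕ)) * c := by push_cast; ring

lemma norm_A_le (l : List (X →L[ℝ] X)) (hl : ∀ T ∈ l, ‖T‖ ≤ 1) (x : X) :
    ‖A l x‖ ≤ ‖x‖ := by
  rcases eq_or_ne l [] with rfl | hne
  · simp [A]
  have hn : 0 < (l.length : ℝ) := by
    exact_mod_cast Nat.pos_of_ne_zero (fun h => hne (List.length_eq_zero_iff.mp h))
  have hsum : ‖l.sum x‖ ≤ l.length * ‖x‖ := by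
    rw [sum_apply']
    have := norm_list_sum_le (l.map (fun T => T x)) ‖x‖ ?_
    · simpa using this
    · intro z hz
      rcases List.mem_map.mp hz with ⟨T, hT, rfl⟩
      calc ‖T x‖ ≤ ‖T‖ * ‖x‖ := T.le_opNorm x
      _ ≤ 1 * ‖x‖ := by gcongr; exact hl T hT
      _ = ‖x‖ := one_mul _
  have hA : ‖A l x‖ = (l.length : ℝ)⁻¹ * ‖l.sum x‖ := by
    simp [A, norm_smul, abs_of_pos (inv_pos.mpr hn)]
  rw [hA, inv_mul_le_iff₀ hn]
  exact hsum

lemma sum_g (Y : Subspace ℝ X) (g : Y →L[ℝ] ℝ) (F : Set (X →L[ℝ] X))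
    (hY : ∀ T ∈ F, ∀ y ∈ Y, T y ∈ Y)
    (hinv : ∀ T ∈ F, ∀ y : Y, ∀ hy : T y ∈ Y, g ⟨T y, hy⟩ = g y) (y : Y) :
    ∀ l : List (X →L[ℝ] X), (∀ T ∈ l, T ∈ F) →
      ∃ h : (l.map fun T => T (y : X)).sum ∈ Y,
        g ⟨(l.map fun T => T (y : X)).sum, h⟩ = l.length * g y := by
  intro l
  induction l with
  | nil =>
    intro _
    refine ⟨by simp, ?_⟩
    have h0 : (⟨(([] : List (X →L[ℝ] X)).map fun T => T (y : X)).sum, by simp⟩ : Y) = 0 := by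
      ext; simp
    rw [h0]
    simp
  | cons T l ih =>
    intro hmem
    have hT : T ∈ F := hmem T (by simp)
    have hTy : T (y : X) ∈ Y := hY T hT y y.2
    obtain ⟨hs, hval⟩ := ih fun T' hT' => hmem T' (by simp [hT'])
    have hsum : ((T :: l).map fun T => T (y : X)).sum ∈ Y := by
      simpa using Y.add_mem hTy hs
    refine ⟨hsum, ?_⟩
    have heq : (⟨((T :: l).map fun T => T (y : X)).sum, hsum⟩ : Y)
        = ⟨T (y : X), hTy⟩ + ⟨(l.map fun T => T (y : X)).sum, hs⟩ := by
      ext; simp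
    rw [heq, map_add, hinv T hT y hTy, hval]
    simp only [List.length_cons]
    push_cast
    ring

lemma g_le_aux (Y : Subspace ℝ X) (g : Y →L[ℝ] ℝ) (F : Set (X →L[ℝ] X))
    (hY : ∀ T ∈ F, ∀ y ∈ Y, T y ∈ Y)
    (hinv : ∀ T ∈ F, ∀ y : Y, ∀ hy : T y ∈ Y, g ⟨T y, hy⟩ = g y) (y : Y)
    (l : List (X →L[ℝ] X)) (hl : ∀ T ∈ l, T ∈ F) (hne : l ≠ []) :
    g y ≤ ‖g‖ * ‖A l (y : X)‖ := by
  obtain ⟨hs, hval⟩ := sum_g Y g F hY hinv y l hl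
  have hn : (0 : ℝ) < l.length := by
    exact_mod_cast Nat.pos_of_ne_zero (fun h => hne (List.length_eq_zero_iff.mp h))
  have hAmem : A l (y : X) ∈ Y := by
    have : A l (y : X) = (l.length : ℝ)⁻¹ • (l.map fun T => T (y : X)).sum := by
      simp [A, sum_apply']
    rw [this]
    exact Y.smul_mem _ hs
  have hgA : g ⟨A l (y : X), hAmem⟩ = g y := by
    have hz : (⟨A l (y : X), hAmem⟩ : Y)
        = (l.length : ℝ)⁻¹ • ⟨(l.map fun T => T (y : X)).sum, hs⟩ := by
      ext; simp [A, sum_apply']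
    rw [hz, map_smul, hval, smul_eq_mul]
    field_simp
  calc g y = g ⟨A l (y : X), hAmem⟩ := hgA.symm
  _ ≤ ‖g ⟨A l (y : X), hAmem⟩‖ := le_abs_self _
  _ ≤ ‖g‖ * ‖(⟨A l (y : X), hAmem⟩ : Y)‖ := g.le_opNorm _
  _ = ‖g‖ * ‖A l (y : X)‖ := rfl

end Main

end Stmt11Aux

lemma Stmt11Aux.list_range_sum {M : Type*} [AddCommMonoid M] (f : ℕ → M) :
    ∀ n, ((List.range n).map f).sum = ∑ k ∈ Finset.range n, f k := by
  intro n
  induction n with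
  | zero => simp
  | succ n ih =>
    rw [List.range_succ, List.map_append, List.sum_append, Finset.sum_range_succ, ih]
    simp

open Stmt11Aux

theorem stmt11 {X : Type*} [NormedAddCommGroup X] [NormedSpace ℝ X]
    (Y : Subspace ℝ X) (g : Y →L[ℝ] ℝ)
    (F : Set (X →L[ℝ] X))
    (hclosed : ∀ T ∈ F, ∀ S ∈ F, T.comp S ∈ F)
    (habel : ∀ T ∈ F, ∀ S ∈ F, T.comp S = S.comp T)
    (hY : ∀ T ∈ F, ∀ y ∈ Y, T y ∈ Y)
    (hnorm : ∀ T ∈ F, ‖T‖ ≤ 1)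
    (hinv : ∀ T ∈ F, ∀ y : Y, ∀ hy : T y ∈ Y, g ⟨T y, hy⟩ = g y) :
    ∃ Λ : X →L[ℝ] ℝ, (∀ y : Y, Λ y = g y) ∧ ‖Λ‖ = ‖g‖ ∧
      ∀ T ∈ F, Λ.comp T = Λ := by
  classical
  rcases Set.eq_empty_or_nonempty F with rfl | ⟨T₀, hT₀⟩
  · obtain ⟨Λ, h1, h2⟩ := exists_extension_norm_eq Y g
    exact ⟨Λ, h1, h2, by simp⟩
  set V : Set (List (X →L[ℝ] X)) := {l | l ≠ [] ∧ ∀ T ∈ l, T ∈ F} with hVdef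
  have hVne : ([T₀] : List (X →L[ℝ] X)) ∈ V := ⟨by simp, by simpa using hT₀⟩
  set q : X → ℝ := fun x => sInf ((fun l => ‖A l x‖) '' V) with hqdef
  have himne : ∀ x : X, ((fun l => ‖A l x‖) '' V).Nonempty :=
    fun x => ⟨_, ⟨[T₀], hVne, rfl⟩⟩
  have hbdd : ∀ x : X, BddBelow ((fun l => ‖A l x‖) '' V) := by
    intro x
    refine ⟨0, fun s hs => ?_⟩
    rcases hs with ⟨l, _, rfl⟩
    exact norm_nonneg _
  have hq_le : ∀ x : X, ∀ l ∈ V, q x ≤ ‖A l x‖ :=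
    fun x l hl => csInf_le (hbdd x) ⟨l, hl, rfl⟩
  have hnorm1 : ∀ l ∈ V, ∀ x : X, ‖A l x‖ ≤ ‖x‖ :=
    fun l hl x => norm_A_le l (fun T hT => hnorm T (hl.2 T hT)) x
  have hq_le_norm : ∀ x : X, q x ≤ ‖x‖ :=
    fun x => (hq_le x [T₀] hVne).trans (hnorm1 _ hVne x)
  have hq_smul : ∀ c : ℝ, 0 < c → ∀ x : X, q (c • x) = c * q x := by
    intro c hc x
    have himage : ((fun l => ‖A l (c • x)‖) '' V) = c • ((fun l => ‖A l x‖) '' V) := by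
      ext s
      simp only [Set.mem_image, Set.mem_smul_set]
      constructor
      · rintro ⟨l, hl, rfl⟩
        exact ⟨‖A l x‖, ⟨l, hl, rfl⟩, by
          simp [map_smul, norm_smul, abs_of_pos hc, smul_eq_mul]⟩
      · rintro ⟨t, ⟨l, hl, rfl⟩, rfl⟩
        exact ⟨l, hl, by simp [map_smul, norm_smul, abs_of_pos hc, smul_eq_mul]⟩
    show sInf ((fun l => ‖A l (c • x)‖) '' V) = c * sInf ((fun l => ‖A l x‖) '' V)
    rw [himage, Real.sInf_smul_of_nonneg hc.le]
    simp [smul_eq_mul]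
  have hVpl : ∀ l ∈ V, ∀ m ∈ V, pl l m ∈ V := by
    intro l hl m hm
    refine ⟨pl_ne_nil hl.1 hm.1, fun R hR => ?_⟩
    obtain ⟨T, hT, S, hS, rfl⟩ := mem_pl hR
    exact hclosed T (hl.2 T hT) S (hm.2 S hS)
  have hq_add : ∀ x y : X, q (x + y) ≤ q x + q y := by
    intro x y
    refine le_of_forall_pos_le_add ?_
    intro ε hε
    obtain ⟨a, ⟨l, hl, rfl⟩, hal⟩ := Real.lt_sInf_add_pos (himne x) (half_pos hε)
    obtain ⟨b, ⟨m, hm, rfl⟩, hbm⟩ := Real.lt_sInf_add_pos (himne y) (half_pos hε)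
    have hk : pl l m ∈ V := hVpl l hl m hm
    have h1 : q (x + y) ≤ ‖A (pl l m) (x + y)‖ := hq_le _ _ hk
    have h2 : ‖A (pl l m) (x + y)‖ ≤ ‖A (pl l m) x‖ + ‖A (pl l m) y‖ := by
      rw [map_add]; exact norm_add_le _ _
    have h3 : ‖A (pl l m) x‖ ≤ ‖A l x‖ := by
      have hcomm : A (pl l m) = A (pl m l) :=
        A_pl_comm l m (fun T hT S hS => habel T (hl.2 T hT) S (hm.2 S hS))
      rw [hcomm, A_pl]
      calc ‖(A m).comp (A l) x‖ = ‖A m (A l x)‖ := by rw [ContinuousLinearMap.comp_apply]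
      _ ≤ ‖A l x‖ := hnorm1 m hm _
    have h4 : ‖A (pl l m) y‖ ≤ ‖A m y‖ := by
      rw [A_pl]
      calc ‖(A l).comp (A m) y‖ = ‖A l (A m y)‖ := by rw [ContinuousLinearMap.comp_apply]
      _ ≤ ‖A m y‖ := hnorm1 l hl _
    have hqx : q x = sInf ((fun l => ‖A l x‖) '' V) := rfl
    have hqy : q y = sInf ((fun l => ‖A l y‖) '' V) := rfl
    rw [← hqx] at hal
    rw [← hqy] at hbm
    linarith
  have hmaj : ∀ y : Y, g y ≤ ‖g‖ * q (y : X) := by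
    intro y
    rcases eq_or_lt_of_le (norm_nonneg g) with hg0 | hgpos
    · have hgz : g = 0 := (ContinuousLinearMap.opNorm_zero_iff g).mp hg0.symm
      have hq0 : 0 ≤ q (y : X) := le_csInf (himne _) (by rintro s ⟨l, _, rfl⟩; exact norm_nonneg _)
      have hgy : g y = 0 := by rw [hgz]; rfl
      rw [hgy]
      exact mul_nonneg (norm_nonneg g) hq0
    · have hdiv : g y / ‖g‖ ≤ q (y : X) := by
        refine le_csInf (himne _) ?_
        rintro s ⟨l, hl, rfl⟩
        rw [div_le_iff₀ hgpos]
        calc g y ≤ ‖g‖ * ‖A l (y : X)‖ := g_le_aux Y g F hY hinv y l hl.2 hl.1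
        _ = ‖A l (y : X)‖ * ‖g‖ := mul_comm _ _
      calc g y = (g y / ‖g‖) * ‖g‖ := by field_simp
      _ ≤ q (y : X) * ‖g‖ := mul_le_mul_of_nonneg_right hdiv (norm_nonneg g)
      _ = ‖g‖ * q (y : X) := mul_comm _ _
  obtain ⟨Λ₀, hext, hle⟩ := exists_extension_of_le_sublinear ⟨Y, (g : Y →ₗ[ℝ] ℝ)⟩
    (fun x => ‖g‖ * q x)
    (fun c hc x => by
      show ‖g‖ * q (c • x) = c * (‖g‖ * q x)
      rw [hq_smul c hc x]; ring)
    (fun x y => by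
      show ‖g‖ * q (x + y) ≤ ‖g‖ * q x + ‖g‖ * q y
      have h := hq_add x y
      nlinarith [norm_nonneg g])
    (fun y => hmaj y)
  have hb : ∀ x : X, |Λ₀ x| ≤ ‖g‖ * ‖x‖ := by
    intro x
    have hq1 : ‖g‖ * q x ≤ ‖g‖ * ‖x‖ :=
      mul_le_mul_of_nonneg_left (hq_le_norm x) (norm_nonneg g)
    have hq2 : ‖g‖ * q (-x) ≤ ‖g‖ * ‖x‖ := by
      have := mul_le_mul_of_nonneg_left (hq_le_norm (-x)) (norm_nonneg g)
      rwa [norm_neg] at this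
    have h1 : Λ₀ x ≤ ‖g‖ * ‖x‖ := (hle x).trans hq1
    have h2 : Λ₀ (-x) ≤ ‖g‖ * ‖x‖ := (hle (-x)).trans hq2
    rw [map_neg] at h2
    exact abs_le.2 ⟨by linarith, h1⟩
  set Λ : X →L[ℝ] ℝ := Λ₀.mkContinuous ‖g‖ (fun x => by
    rw [Real.norm_eq_abs]; exact hb x) with hΛdef
  have hΛap : ∀ x : X, Λ x = Λ₀ x := fun x => rfl
  have hΛext : ∀ y : Y, Λ y = g y := fun y => hext y
  have hΛnorm : ‖Λ‖ = ‖g‖ := by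
    refine le_antisymm (Λ₀.mkContinuous_norm_le (norm_nonneg g) _) ?_
    refine g.opNorm_le_bound (norm_nonneg Λ) fun y => ?_
    rw [← hΛext y]
    calc ‖Λ (y : X)‖ ≤ ‖Λ‖ * ‖(y : X)‖ := Λ.le_opNorm _
    _ = ‖Λ‖ * ‖y‖ := rfl
  refine ⟨Λ, hΛext, hΛnorm, ?_⟩
  intro T hT
  have hpow : ∀ k : ℕ, T ^ (k + 1) ∈ F := by
    intro k
    induction k with
    | zero => simpa [pow_one] using hT
    | succ k ih =>
      have hek : T ^ (k + 1 + 1) = (T ^ (k + 1)).comp T := by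
        rw [pow_succ]; rfl
      rw [hek]
      exact hclosed _ ih T hT
  have hqneg : ∀ z : X, q (-z) = q z := by
    intro z
    show sInf ((fun l => ‖A l (-z)‖) '' V) = sInf ((fun l => ‖A l z‖) '' V)
    congr 1
    ext s
    simp only [Set.mem_image]
    constructor <;> rintro ⟨l, hl, rfl⟩ <;> exact ⟨l, hl, by simp⟩
  have key : ∀ x : X, q (x - T x) ≤ 0 := by
    intro x
    have hstep : ∀ n : ℕ, 0 < n → q (x - T x) ≤ 2 * ‖x‖ / n := by
      intro n hn
      set l : List (X →L[ℝ] X) := (List.range n).map (fun k => T ^ (k + 1)) with hldef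
      have hlV : l ∈ V := by
        constructor
        · simp only [hldef, ne_eq, List.map_eq_nil_iff, List.range_eq_nil]
          omega
        · intro S hS
          rcases List.mem_map.mp hS with ⟨k, _, rfl⟩
          exact hpow k
      have hlen : l.length = n := by simp [hldef]
      have hsumeq : l.sum (x - T x) = T x - (T ^ (n + 1)) x := by
        rw [sum_apply']
        have hmapeq : l.map (fun S => S (x - T x))
            = (List.range n).map (fun k => (T ^ (k + 1)) x - (T ^ (k + 1 + 1)) x) := by
          rw [hldef, List.map_map]
          refine List.map_congr_left ?_
          intro k _
          simp only [Function.comp_apply, map_sub]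
          have he : (T ^ (k + 1 + 1)) x = (T ^ (k + 1)) (T x) := by
            rw [pow_succ]; rfl
          rw [he]
        rw [hmapeq, list_range_sum]
        have hts := Finset.sum_range_sub' (f := fun k => (T ^ (k + 1)) x) n
        simpa [pow_one] using hts
      have hAbound : ‖A l (x - T x)‖ ≤ 2 * ‖x‖ / n := by
        have hAe : A l (x - T x) = (n : ℝ)⁻¹ • (T x - (T ^ (n + 1)) x) := by
          simp only [A, hlen, ContinuousLinearMap.coe_smul', Pi.smul_apply]
          rw [hsumeq]
        rw [hAe, norm_smul]
        have hnpos : (0 : ℝ) < n := by exact_mod_cast hn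
        rw [Real.norm_eq_abs, abs_of_pos (inv_pos.mpr hnpos)]
        rw [div_eq_inv_mul]
        gcongr
        have hT1 : ‖T x‖ ≤ ‖x‖ := by
          calc ‖T x‖ ≤ ‖T‖ * ‖x‖ := T.le_opNorm x
          _ ≤ 1 * ‖x‖ := by gcongr; exact hnorm T hT
          _ = ‖x‖ := one_mul _
        have hT2 : ‖(T ^ (n + 1)) x‖ ≤ ‖x‖ := by
          calc ‖(T ^ (n + 1)) x‖ ≤ ‖T ^ (n + 1)‖ * ‖x‖ := (T ^ (n + 1)).le_opNorm x
          _ ≤ 1 * ‖x‖ := by gcongr; exact hnorm _ (hpow n)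
          _ = ‖x‖ := one_mul _
        calc ‖T x - (T ^ (n + 1)) x‖ ≤ ‖T x‖ + ‖(T ^ (n + 1)) x‖ := norm_sub_le _ _
        _ ≤ 2 * ‖x‖ := by linarith
      exact (hq_le _ l hlV).trans hAbound
    refine le_of_forall_pos_le_add ?_
    intro ε hε
    obtain ⟨n, hn⟩ := exists_nat_gt (2 * ‖x‖ / ε)
    have hεn : 2 * ‖x‖ / (n + 1 : ℕ) ≤ ε := by
      have hnn : (0 : ℝ) ≤ n := n.cast_nonneg
      rw [div_le_iff₀ (by positivity)]
      rw [div_lt_iff₀ hε] at hn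
      push_cast
      nlinarith
    have := hstep (n + 1) n.succ_pos
    linarith
  have key2 : ∀ x : X, q (T x - x) ≤ 0 := by
    intro x
    have : T x - x = -(x - T x) := by abel
    rw [this, hqneg]
    exact key x
  ext x
  have h1 : Λ₀ (x - T x) ≤ 0 := by
    refine (hle (x - T x)).trans ?_
    have hk := key x
    nlinarith [norm_nonneg g]
  have h2 : Λ₀ (T x - x) ≤ 0 := by
    refine (hle (T x - x)).trans ?_
    have hk := key2 x
    nlinarith [norm_nonneg g]
  rw [map_sub] at h1 h2
  show Λ (T x) = Λ x
  rw [hΛap, hΛap]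
  linarith
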